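/- Under the hypotheses of the Euler product theorem (a totally multiplicative, λ completely additive, absolute convergence for Re s > σ₀), multiplying the series by (1 - a 2 · exp(-λ 2 · s)) cancels all terms with even index: (1 - a 2 e^{-λ₂ s}) · ∑ₙ a_n e^{-λ_n s} = ∑_{n odd} a_n e^{-λ_n s}. -/

import Mathlib

theorem cancel_even_terms
    (a : ℕ → ℂ) (lam : ℕ → ℝ) (σ₀ : ℝ)
    (ha1 : a 1 = 1) (hamul : ∀ j k : ℕ, a (j * k) = a j * a k)
    (hl1 : lam 1 = 0)
    (hladd : ∀ j k : ℕ, 1 ≤ j → 1 ≤ k → lam (j * k) = lam j + lam k)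
    (hsum : ∀ s : ℂ, σ₀ < s.re →
      Summable (fun n : ℕ+ => ‖a n * Complex.exp (-(lam n : ℂ) * s)‖))
    (s : ℂ) (hs : σ₀ < s.re) :
    (1 - a 2 * Complex.exp (-(lam 2 : ℂ) * s)) *
        ∑' n : ℕ+, a n * Complex.exp (-(lam n : ℂ) * s)
      = ∑' n : ℕ+, if Odd (n : ℕ) then a n * Complex.exp (-(lam n : ℂ) * s) else 0 := by
  set f : ℕ+ → ℂ := fun n => a n * Complex.exp (-(lam n : ℂ) * s) with hf
  have hsf : Summable f := (hsum s hs).of_norm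
  set c : ℂ := a 2 * Complex.exp (-(lam 2 : ℂ) * s) with hc
  have key : ∀ n : ℕ+, c * f n = f (2 * n) := by
    intro n
    have hc2 : ((2 * n : ℕ+) : ℕ) = 2 * (n : ℕ) := by
      simp [PNat.mul_coe]
    simp only [hf, hc, hc2, hamul 2 n, hladd 2 n (by norm_num) n.pos]
    push_cast
    rw [neg_add, add_mul, Complex.exp_add]
    ring
  set f' : ℕ+ → ℂ := fun n => if Odd (n : ℕ) then 0 else f n with hf'
  have hsf' : Summable f' := by
    apply Summable.of_norm_bounded (hsum s hs)
    intro n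
    by_cases h : Odd (n : ℕ)
    · simp only [hf', if_pos h, norm_zero]
      positivity
    · simp only [hf', if_neg h]
      exact le_rfl
  set g : ℕ+ → ℕ+ := fun n => 2 * n with hg
  have hginj : Function.Injective g := fun x y h => by
    simpa [hg] using mul_left_cancel h
  have htsum2 : ∑' n : ℕ+, f (2 * n) = ∑' n, f' n := by
    have hsupp : Function.support f' ⊆ Set.range g := by
      intro x hx
      have hodd : ¬ Odd (x : ℕ) := by
        intro h
        apply hx
        show (if Odd (x : ℕ) then (0:ℂ) else f x) = 0
        rw [if_pos h]
      rw [Nat.not_odd_iff_even] at hodd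
      obtain ⟨m, hm⟩ := hodd
      have hmpos : 0 < m := by have := x.pos; omega
      refine ⟨⟨m, hmpos⟩, ?_⟩
      apply PNat.coe_injective
      have : ((g ⟨m, hmpos⟩ : ℕ+) : ℕ) = 2 * m := rfl
      rw [this]; omega
    rw [← hginj.tsum_eq hsupp]
    apply tsum_congr
    intro n
    have hev : Even ((g n : ℕ)) := ⟨n, by simp [hg, PNat.mul_coe, two_mul]⟩
    show f (2 * n) = (if Odd ((g n : ℕ)) then (0:ℂ) else f (g n))
    rw [if_neg (Nat.not_odd_iff_even.mpr hev)]
  calc (1 - c) * ∑' n, f n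
      = (∑' n, f n) - ∑' n, c * f n := by rw [sub_mul, one_mul, tsum_mul_left]
    _ = (∑' n, f n) - ∑' n, f' n := by
        rw [← htsum2]; congr 1; exact tsum_congr key
    _ = ∑' n, (f n - f' n) := (Summable.tsum_sub hsf hsf').symm
    _ = ∑' n : ℕ+, if Odd (n : ℕ) then f n else 0 := by
        apply tsum_congr
        intro n
        simp only [hf']
        split <;> simp
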